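/- Let q ≥ 2 and n, d be positive integers, and let L be a positive integer with L^d ≥ 2d·log_q(n) + log_q(q/(q-1)) and L ≤ n. Then |D_{d,q}(n,L)| ≥ q^(n^d − 1), i.e., the redundancy of the set of L-cubes unique arrays is at most 1. -/
import Mathlib


/-- `W` contains two identical `L`-cubes at distinct positions `u, v ∈ ℕ^d`. -/
def identicalCubesAt (n d L q : ℕ) (W : (Fin d → Fin n) → Fin q)
    (u v : Fin d → ℕ) : Prop :=
  u ≠ v ∧ (∀ i, u i + L ≤ n) ∧ (∀ i, v i + L ≤ n) ∧
  ∀ (x y : Fin d → Fin n) (off : Fin d → Fin L),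
    (∀ i, (x i : ℕ) = u i + (off i : ℕ)) → (∀ i, (y i : ℕ) = v i + (off i : ℕ)) →
    W x = W y

open scoped Classical

open Finset in
/-- The cube at `v` has exactly `L ^ d` cells. -/
lemma cube_card (n d L : ℕ) (v : Fin d → ℕ) (hv : ∀ i, v i + L ≤ n) :
    (Finset.univ.filter
      (fun x : Fin d → Fin n => ∀ i, v i ≤ (x i : ℕ) ∧ (x i : ℕ) < v i + L)).card
      = L ^ d := by
  classical
  have h : (Finset.univ.filter
      (fun x : Fin d → Fin n => ∀ i, v i ≤ (x i : ℕ) ∧ (x i : ℕ) < v i + L)).card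
      = (Finset.univ : Finset (Fin d → Fin L)).card := by
    refine Finset.card_bij'
      (fun x hx => fun i => (⟨(x i : ℕ) - v i, by
        have h := (Finset.mem_filter.mp hx).2 i; omega⟩ : Fin L))
      (fun o ho => fun i => (⟨v i + (o i : ℕ), by
        have h1 := hv i; have h2 := (o i).isLt; omega⟩ : Fin n))
      ?_ ?_ ?_ ?_
    · intro a ha; exact Finset.mem_univ _
    · intro o ho
      simp only [Finset.mem_filter, Finset.mem_univ, true_and]
      intro i
      have h2 := (o i).isLt
      constructor <;> simp <;> omega
    · intro a ha
      funext i
      have h := (Finset.mem_filter.mp ha).2 i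
      apply Fin.ext
      simp
      omega
    · intro o ho
      funext i
      apply Fin.ext
      simp
  rw [h]
  simp

/-- Two arrays satisfying the same cube-matching constraint that agree outside the
`v`-cube are equal, given a coordinate where `u < v`. -/
lemma restrict_inj (n d L q : ℕ) (u v : Fin d → ℕ) (hu : ∀ i, u i + L ≤ n)
    (j : Fin d) (hj : u j < v j)
    (W₁ W₂ : (Fin d → Fin n) → Fin q)
    (h₁ : ∀ (x y : Fin d → Fin n) (off : Fin d → Fin L),
      (∀ i, (x i : ℕ) = u i + (off i : ℕ)) → (∀ i, (y i : ℕ) = v i + (off i : ℕ)) →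
      W₁ x = W₁ y)
    (h₂ : ∀ (x y : Fin d → Fin n) (off : Fin d → Fin L),
      (∀ i, (x i : ℕ) = u i + (off i : ℕ)) → (∀ i, (y i : ℕ) = v i + (off i : ℕ)) →
      W₂ x = W₂ y)
    (hagree : ∀ x : Fin d → Fin n,
      (¬ ∀ i, v i ≤ (x i : ℕ) ∧ (x i : ℕ) < v i + L) → W₁ x = W₂ x) :
    W₁ = W₂ := by
  suffices H : ∀ m (x : Fin d → Fin n), (x j : ℕ) < m → W₁ x = W₂ x by
    funext x; exact H ((x j : ℕ) + 1) x (by omega)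
  intro m
  induction m with
  | zero => intro x hx; omega
  | succ m ih =>
    intro x hx
    by_cases hT : ∀ i, v i ≤ (x i : ℕ) ∧ (x i : ℕ) < v i + L
    · set off : Fin d → Fin L := fun i => ⟨(x i : ℕ) - v i, by have := hT i; omega⟩
        with hoff
      set y : Fin d → Fin n := fun i => ⟨u i + ((x i : ℕ) - v i), by
        have := hT i; have := hu i; omega⟩ with hy
      have hyo : ∀ i, (y i : ℕ) = u i + (off i : ℕ) := fun i => rfl
      have hxo : ∀ i, (x i : ℕ) = v i + (off i : ℕ) := by
        intro i; have := hT i; simp [hoff]; omega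
      have e1 : W₁ y = W₁ x := h₁ y x off hyo hxo
      have e2 : W₂ y = W₂ x := h₂ y x off hyo hxo
      rw [← e1, ← e2]
      exact ih y (by have := hT j; simp [hy]; omega)
    · exact hagree x hT

lemma identicalCubesAt_symm {n d L q : ℕ} {W : (Fin d → Fin n) → Fin q}
    {u v : Fin d → ℕ} (h : identicalCubesAt n d L q W u v) :
    identicalCubesAt n d L q W v u := by
  obtain ⟨hne, hu, hv, hc⟩ := h
  exact ⟨hne.symm, hv, hu, fun x y off hx hy => (hc y x off hy hx).symm⟩

open Finset in
/-- For a fixed pair `(u,v)`, the number of arrays with identical cubes at `u,v`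
is at most `q ^ (n^d - L^d)`. -/
lemma pair_card (q n d L : ℕ) (u v : Fin d → ℕ) :
    (Finset.univ.filter
      (fun W : (Fin d → Fin n) → Fin q => identicalCubesAt n d L q W u v)).card
      ≤ q ^ (n ^ d - L ^ d) := by
  classical
  by_cases hne : (Finset.univ.filter
      (fun W : (Fin d → Fin n) → Fin q => identicalCubesAt n d L q W u v)) = ∅
  · rw [hne]; simp
  obtain ⟨W₀, hW₀⟩ := Finset.nonempty_iff_ne_empty.mpr hne
  obtain ⟨huv, hu, hv, _⟩ := (Finset.mem_filter.mp hW₀).2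
  obtain ⟨j, hj⟩ : ∃ j, u j ≠ v j := by
    by_contra h; push_neg at h; exact huv (funext h)
  -- WLOG machinery: a general count lemma parametric in which cube we restrict away.
  have key : ∀ (a b : Fin d → ℕ), (∀ i, a i + L ≤ n) → (∀ i, b i + L ≤ n) →
      a j < b j →
      (Finset.univ.filter
        (fun W : (Fin d → Fin n) → Fin q => identicalCubesAt n d L q W a b)).card
        ≤ q ^ (n ^ d - L ^ d) := by
    intro a b ha hb hab
    set P : (Fin d → Fin n) → Prop :=
      fun x => ∀ i, b i ≤ (x i : ℕ) ∧ (x i : ℕ) < b i + L with hP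
    have hcard : Fintype.card {x : Fin d → Fin n // ¬ P x} = n ^ d - L ^ d := by
      rw [Fintype.card_subtype_compl]
      have h1 : Fintype.card {x : Fin d → Fin n // P x}
          = (Finset.univ.filter P).card := Fintype.card_subtype _
      rw [h1, cube_card n d L b hb]
      congr 1
      simp [Fintype.card_fun]
    calc (Finset.univ.filter
        (fun W : (Fin d → Fin n) → Fin q => identicalCubesAt n d L q W a b)).card
        ≤ (Finset.univ : Finset ({x : Fin d → Fin n // ¬ P x} → Fin q)).card := by
          apply Finset.card_le_card_of_injOn
            (fun W => fun x => W x.val)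
          · intro _ _; exact Finset.mem_univ _
          · intro W₁ hW₁ W₂ hW₂ hfeq
            obtain ⟨_, _, _, hc₁⟩ := (Finset.mem_filter.mp hW₁).2
            obtain ⟨_, _, _, hc₂⟩ := (Finset.mem_filter.mp hW₂).2
            exact restrict_inj n d L q a b ha j hab W₁ W₂ hc₁ hc₂
              (fun x hx => congrFun hfeq (⟨x, hx⟩ : {x // ¬ P x}))
      _ = q ^ (n ^ d - L ^ d) := by
          rw [Finset.card_univ]
          simp [Fintype.card_fun, hcard]
  rcases lt_or_gt_of_ne hj with h | h
  · exact key u v hu hv h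
  · have hswap : (Finset.univ.filter
        (fun W : (Fin d → Fin n) → Fin q => identicalCubesAt n d L q W u v))
        = (Finset.univ.filter
        (fun W : (Fin d → Fin n) → Fin q => identicalCubesAt n d L q W v u)) := by
      apply Finset.filter_congr
      intro W _
      exact ⟨fun h => identicalCubesAt_symm h, fun h => identicalCubesAt_symm h⟩
    rw [hswap]
    exact key v u hv hu h

theorem stmt5 (q n d L : ℕ) (hq : 2 ≤ q) (hn : 1 ≤ n) (hd : 1 ≤ d) (hL : 1 ≤ L)
    (hLn : L ≤ n)
    (hbound : 2 * (d : ℝ) * Real.logb q n + Real.logb q ((q : ℝ) / ((q : ℝ) - 1))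
        ≤ (L : ℝ) ^ d) :
    q ^ (n ^ d - 1) ≤
      Nat.card {W : (Fin d → Fin n) → Fin q //
        ∀ u v : Fin d → ℕ, ¬ identicalCubesAt n d L q W u v} := by
  classical
  -- key numeric inequality over ℕ: q * n^(2d) ≤ q^(L^d) * (q-1)
  have hq1 : (1 : ℝ) < (q : ℝ) := by exact_mod_cast hq.trans_lt' one_lt_two
  have hn1 : (1 : ℝ) ≤ (n : ℝ) := by exact_mod_cast hn
  have hq1' : (0 : ℝ) < (q : ℝ) - 1 := by linarith
  have hX : (0 : ℝ) < (n : ℝ) ^ (2 * d) * ((q : ℝ) / ((q : ℝ) - 1)) := by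
    positivity
  have hlog : Real.logb q ((n : ℝ) ^ (2 * d) * ((q : ℝ) / ((q : ℝ) - 1)))
      ≤ ((L ^ d : ℕ) : ℝ) := by
    rw [Real.logb_mul (by positivity) (by positivity), Real.logb_pow]
    push_cast
    linarith [hbound]
  have hreal : (n : ℝ) ^ (2 * d) * ((q : ℝ) / ((q : ℝ) - 1)) ≤ (q : ℝ) ^ (L ^ d) := by
    have := (Real.logb_le_iff_le_rpow hq1 hX).mp hlog
    rwa [Real.rpow_natCast] at this
  have keyR : (q : ℝ) * ((n : ℝ) ^ d * (n : ℝ) ^ d)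
      ≤ (q : ℝ) ^ (L ^ d) * ((q : ℝ) - 1) := by
    have h2 : (n : ℝ) ^ (2 * d) = (n : ℝ) ^ d * (n : ℝ) ^ d := by
      rw [two_mul, pow_add]
    rw [h2] at hreal
    have := mul_le_mul_of_nonneg_right hreal (le_of_lt hq1')
    rw [mul_assoc, div_mul_cancel₀] at this
    · linarith [this]
    · linarith
  have keyN : q * (n ^ d * n ^ d) ≤ q ^ (L ^ d) * (q - 1) := by
    have : ((q * (n ^ d * n ^ d) : ℕ) : ℝ) ≤ ((q ^ (L ^ d) * (q - 1) : ℕ) : ℝ) := by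
      push_cast [Nat.cast_sub (le_of_lt (lt_of_lt_of_le one_lt_two hq))]
      convert keyR using 2 <;> push_cast <;> ring
    exact_mod_cast this
  -- counting
  set Ω := (Fin d → Fin n) → Fin q with hΩ
  have hΩcard : Fintype.card Ω = q ^ (n ^ d) := by
    simp [hΩ, Fintype.card_fun]
  set Bad : Finset Ω := Finset.univ.filter
    (fun W => ∃ u v : Fin d → ℕ, identicalCubesAt n d L q W u v) with hBad
  -- union bound for Bad
  have hBadCard : Bad.card ≤ (n ^ d * n ^ d) * q ^ (n ^ d - L ^ d) := by
    have hsub : Bad ⊆ (Finset.univ :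
        Finset ((Fin d → Fin n) × (Fin d → Fin n))).biUnion
        (fun p => Finset.univ.filter
          (fun W : Ω => identicalCubesAt n d L q W
            (fun i => ((p.1 i : ℕ))) (fun i => ((p.2 i : ℕ))))) := by
      intro W hW
      obtain ⟨u, v, h⟩ := (Finset.mem_filter.mp hW).2
      obtain ⟨hne, hu, hv, hc⟩ := h
      have hun : ∀ i, u i < n := fun i => by have := hu i; omega
      have hvn : ∀ i, v i < n := fun i => by have := hv i; omega
      refine Finset.mem_biUnion.mpr ⟨(fun i => ⟨u i, hun i⟩, fun i => ⟨v i, hvn i⟩),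
        Finset.mem_univ _, ?_⟩
      simp only [Finset.mem_filter, Finset.mem_univ, true_and]
      exact ⟨hne, hu, hv, hc⟩
    calc Bad.card ≤ _ := Finset.card_le_card hsub
      _ ≤ ∑ p ∈ (Finset.univ :
          Finset ((Fin d → Fin n) × (Fin d → Fin n))), (Finset.univ.filter
          (fun W : Ω => identicalCubesAt n d L q W
            (fun i => ((p.1 i : ℕ))) (fun i => ((p.2 i : ℕ))))).card :=
        Finset.card_biUnion_le
      _ ≤ (Finset.univ :
          Finset ((Fin d → Fin n) × (Fin d → Fin n))).card • (q ^ (n ^ d - L ^ d)) := by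
        apply Finset.sum_le_card_nsmul
        intro p _
        exact pair_card q n d L _ _
      _ = (n ^ d * n ^ d) * q ^ (n ^ d - L ^ d) := by
        rw [Finset.card_univ]
        simp [Fintype.card_prod, Fintype.card_fun, smul_eq_mul]
  -- the good set
  have hGood : Nat.card {W : Ω //
      ∀ u v : Fin d → ℕ, ¬ identicalCubesAt n d L q W u v}
      = q ^ (n ^ d) - Bad.card := by
    rw [Nat.card_eq_fintype_card, Fintype.card_subtype]
    have hpred : (Finset.univ.filter (fun W : Ω =>
        ∀ u v : Fin d → ℕ, ¬ identicalCubesAt n d L q W u v))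
        = Finset.univ.filter (fun W : Ω =>
          ¬ ∃ u v : Fin d → ℕ, identicalCubesAt n d L q W u v) := by
      apply Finset.filter_congr
      intro W _
      push_neg
      rfl
    rw [hpred, Finset.filter_not, Finset.card_sdiff_of_subset (Finset.filter_subset _ _),
      Finset.card_univ, hΩcard]
  rw [hGood]
  -- final arithmetic
  have hLd1 : 1 ≤ L ^ d := Nat.one_le_pow _ _ hL
  have hLdn : L ^ d ≤ n ^ d := Nat.pow_le_pow_left hLn d
  have hnd1 : 1 ≤ n ^ d := Nat.one_le_pow _ _ hn
  have hq0 : 0 < q := by omega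
  -- from keyN : n^{2d} ≤ q^{L^d - 1} * (q-1)
  have hqLd : q ^ (L ^ d) = q * q ^ (L ^ d - 1) := by
    rw [← pow_succ']
    congr 1
    omega
  have hkey2 : n ^ d * n ^ d ≤ q ^ (L ^ d - 1) * (q - 1) := by
    rw [hqLd] at keyN
    have := keyN
    rw [mul_assoc] at this
    exact Nat.le_of_mul_le_mul_left this hq0
  have hstep : q ^ (L ^ d - 1) + n ^ d * n ^ d ≤ q ^ (L ^ d) := by
    calc q ^ (L ^ d - 1) + n ^ d * n ^ d
        ≤ q ^ (L ^ d - 1) + q ^ (L ^ d - 1) * (q - 1) := by omega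
      _ = q ^ (L ^ d - 1) * q := by
          have hq' : 1 + (q - 1) = q := by omega
          calc q ^ (L ^ d - 1) + q ^ (L ^ d - 1) * (q - 1)
              = q ^ (L ^ d - 1) * (1 + (q - 1)) := by ring
            _ = q ^ (L ^ d - 1) * q := by rw [hq']
      _ = q ^ (L ^ d) := by rw [← pow_succ]; congr 1; omega
  -- multiply hstep by q^{n^d - L^d}
  have hmain : q ^ (n ^ d - 1) + (n ^ d * n ^ d) * q ^ (n ^ d - L ^ d)
      ≤ q ^ (n ^ d) := by
    have e1 : q ^ (n ^ d) = q ^ (L ^ d) * q ^ (n ^ d - L ^ d) := by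
      rw [← pow_add]; congr 1; omega
    have e2 : q ^ (n ^ d - 1) = q ^ (L ^ d - 1) * q ^ (n ^ d - L ^ d) := by
      rw [← pow_add]; congr 1; omega
    rw [e1, e2]
    calc q ^ (L ^ d - 1) * q ^ (n ^ d - L ^ d)
          + (n ^ d * n ^ d) * q ^ (n ^ d - L ^ d)
        = (q ^ (L ^ d - 1) + n ^ d * n ^ d) * q ^ (n ^ d - L ^ d) := by ring
      _ ≤ q ^ (L ^ d) * q ^ (n ^ d - L ^ d) :=
        Nat.mul_le_mul_right _ hstep
  omega
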